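/- The generalized Jensen-Shannon divergence GJS(P,Q,α) is non-decreasing in α ≥ 0 for any two probability distributions P and Q on a finite alphabet. -/

import Mathlib

open Real Finset Filter

open scoped Classical

variable {X : Type*}

def IsProb [Fintype X] (P : X → ℝ) : Prop := (∀ x, 0 ≤ P x) ∧ ∑ x, P x = 1

noncomputable def KL [Fintype X] (P Q : X → ℝ) : ℝ := ∑ x, P x * Real.log (P x / Q x)

noncomputable def GJS [Fintype X] (P Q : X → ℝ) (α : ℝ) : ℝ :=
  α * KL P (fun x => (α * P x + Q x) / (1 + α)) + KL Q (fun x => (α * P x + Q x) / (1 + α))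

noncomputable def Renyi [Fintype X] (β : ℝ) (P Q : X → ℝ) : ℝ :=
  (1 / (β - 1)) * Real.log (∑ x, P x ^ β * Q x ^ (1 - β))

noncomputable def scoreG [Fintype X] {M : ℕ} (Q : Fin M → X → ℝ) (i : Fin M) : ℝ :=
  ∑ j ∈ Finset.univ.erase i,
    KL (Q j) (fun x => (∑ l ∈ Finset.univ.erase i, Q l x) / ((M : ℝ) - 1))

lemma klog_ge (p r : ℝ) (hp : 0 ≤ p) (hr : 0 ≤ r) (h : r = 0 → p = 0) :
    p - r ≤ p * Real.log (p / r) := by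
  rcases hp.eq_or_lt with h0 | h0
  · rw [← h0]; simp; linarith
  · have hr' : 0 < r := by
      rcases hr.eq_or_lt with hr0 | hr0
      · exact absurd (h hr0.symm) h0.ne'
      · exact hr0
    have hlog : Real.log (r / p) ≤ r / p - 1 :=
      Real.log_le_sub_one_of_pos (div_pos hr' h0)
    have hinv : Real.log (p / r) = - Real.log (r / p) := by
      rw [← Real.log_inv]
      congr 1
      field_simp
    rw [hinv]
    have h2 : 1 - r / p ≤ - Real.log (r / p) := by linarith
    have h3 : p * (1 - r / p) ≤ p * (- Real.log (r / p)) :=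
      mul_le_mul_of_nonneg_left h2 h0.le
    have h4 : p * (1 - r / p) = p - r := by field_simp
    linarith

lemma kl_nonneg [Fintype X] (P R : X → ℝ) (hP : ∀ x, 0 ≤ P x) (hR : ∀ x, 0 ≤ R x)
    (hsupp : ∀ x, R x = 0 → P x = 0) (hsum : ∑ x, R x ≤ ∑ x, P x) : 0 ≤ KL P R := by
  have h1 : ∑ x, (P x - R x) ≤ ∑ x, P x * Real.log (P x / R x) :=
    Finset.sum_le_sum fun x _ => klog_ge (P x) (R x) (hP x) (hR x) (hsupp x)
  have h2 : ∑ x, (P x - R x) = ∑ x, P x - ∑ x, R x := Finset.sum_sub_distrib _ _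
  unfold KL
  linarith

lemma pt (a b p q ma mb : ℝ) (ha : 0 ≤ a) (hb : 0 < b) (hp : 0 ≤ p) (hq : 0 ≤ q)
    (hma : (1 + a) * ma = a * p + q) (hmb : (1 + b) * mb = b * p + q) :
    b * (p * Real.log (p / mb)) + q * Real.log (q / mb)
      = a * (p * Real.log (p / ma)) + q * Real.log (q / ma)
        + (b - a) * (p * Real.log (p / mb)) + (1 + a) * (ma * Real.log (ma / mb)) := by
  have h1a : (0:ℝ) < 1 + a := by linarith
  have h1b : (0:ℝ) < 1 + b := by linarith
  by_cases hq0 : q = 0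
  · subst hq0
    by_cases hp0 : p = 0
    · have hma0 : ma = 0 := by nlinarith
      have hmb0 : mb = 0 := by nlinarith
      subst hp0; rw [hma0, hmb0]; ring
    · have hp' : 0 < p := hp.lt_of_ne (Ne.symm hp0)
      have hmb' : 0 < mb := by nlinarith
      by_cases ha0 : a = 0
      · subst ha0
        have hma0 : ma = 0 := by nlinarith
        rw [hma0]; ring
      · have ha' : 0 < a := ha.lt_of_ne (Ne.symm ha0)
        have hma' : 0 < ma := by nlinarith
        rw [Real.log_div hp0 hmb'.ne', Real.log_div hp0 hma'.ne',
          Real.log_div hma'.ne' hmb'.ne']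
        linear_combination (Real.log mb - Real.log ma) * hma
  · have hq' : 0 < q := hq.lt_of_ne (Ne.symm hq0)
    have hma' : 0 < ma := by nlinarith
    have hmb' : 0 < mb := by nlinarith
    by_cases hp0 : p = 0
    · subst hp0
      rw [Real.log_div hq0 hmb'.ne', Real.log_div hq0 hma'.ne',
        Real.log_div hma'.ne' hmb'.ne']
      linear_combination (Real.log mb - Real.log ma) * hma
    · rw [Real.log_div hp0 hmb'.ne', Real.log_div hp0 hma'.ne',
        Real.log_div hq0 hmb'.ne', Real.log_div hq0 hma'.ne',
        Real.log_div hma'.ne' hmb'.ne']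
      linear_combination (Real.log mb - Real.log ma) * hma

theorem gjs_mono_alpha [Fintype X] (P Q : X → ℝ) (hP : IsProb P) (hQ : IsProb Q) :
    ∀ a b : ℝ, 0 ≤ a → a ≤ b → GJS P Q a ≤ GJS P Q b := by
  intro a b ha hab
  obtain ⟨hPpos, hPsum⟩ := hP
  obtain ⟨hQpos, hQsum⟩ := hQ
  rcases (ha.trans hab).eq_or_lt with hb0 | hb
  · have : a = 0 := le_antisymm (hb0 ▸ hab) ha
    rw [this, ← hb0]
  · have h1a : (0:ℝ) < 1 + a := by linarith
    have h1b : (0:ℝ) < 1 + b := by linarith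
    set Ma : X → ℝ := fun x => (a * P x + Q x) / (1 + a) with hMa
    set Mb : X → ℝ := fun x => (b * P x + Q x) / (1 + b) with hMb
    have hMaeq : ∀ x, (1 + a) * Ma x = a * P x + Q x := by
      intro x; rw [hMa]; field_simp
    have hMbeq : ∀ x, (1 + b) * Mb x = b * P x + Q x := by
      intro x; rw [hMb]; field_simp
    have hMann : ∀ x, 0 ≤ Ma x := fun x =>
      div_nonneg (by nlinarith [hPpos x, hQpos x]) h1a.le
    have hMbnn : ∀ x, 0 ≤ Mb x := fun x =>
      div_nonneg (by nlinarith [hPpos x, hQpos x]) h1b.le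
    have hMbzero : ∀ x, Mb x = 0 → P x = 0 ∧ Q x = 0 := by
      intro x hx
      have h := hMbeq x
      rw [hx, mul_zero] at h
      constructor
      · nlinarith [hPpos x, hQpos x]
      · nlinarith [hPpos x, hQpos x]
    have hMasum : ∑ x, Ma x = 1 := by
      rw [hMa]
      rw [← Finset.sum_div, Finset.sum_add_distrib, ← Finset.mul_sum, hPsum, hQsum]
      field_simp
      ring
    have hMbsum : ∑ x, Mb x = 1 := by
      rw [hMb]
      rw [← Finset.sum_div, Finset.sum_add_distrib, ← Finset.mul_sum, hPsum, hQsum]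
      field_simp
      ring
    have hKL1 : 0 ≤ KL P Mb :=
      kl_nonneg P Mb hPpos hMbnn (fun x hx => (hMbzero x hx).1) (by rw [hMbsum, hPsum])
    have hKL2 : 0 ≤ KL Ma Mb := by
      apply kl_nonneg Ma Mb hMann hMbnn
      · intro x hx
        obtain ⟨h1, h2⟩ := hMbzero x hx
        rw [hMa]; simp [h1, h2]
      · rw [hMbsum, hMasum]
    have key : GJS P Q b = GJS P Q a + (b - a) * KL P Mb + (1 + a) * KL Ma Mb := by
      unfold GJS KL
      rw [← hMa, ← hMb]
      simp only [Finset.mul_sum, ← Finset.sum_add_distrib]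
      apply Finset.sum_congr rfl
      intro x _
      have := pt a b (P x) (Q x) (Ma x) (Mb x) ha hb (hPpos x) (hQpos x) (hMaeq x) (hMbeq x)
      linarith [this]
    have t1 : 0 ≤ (b - a) * KL P Mb := mul_nonneg (by linarith) hKL1
    have t2 : 0 ≤ (1 + a) * KL Ma Mb := mul_nonneg h1a.le hKL2
    linarith
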